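/- Let n → ∞, let n' = n'(n) ≤ n be an integer with n' = n(1 − o(1)), let 0 ≤ p = p(n) ≤ 1 and p' = p'(n) ≤ p with p' = p(1 − o(1)), and let k = k(n) ≤ n' be an integer. Let X ~ Bin(n, p). Assume there exists an integer s = s(n) with k ≤ s ≤ n' such that Pr[X ≥ s] = o(Pr[X ≥ k]), (n − n')/n' = o(1/s), and (p − p')/p = o(1/s). Then for X' ~ Bin(n', p') one has Pr[X ≥ k] = (1 + o(1))·Pr[X' ≥ k]. -/

import Mathlib

set_option maxHeartbeats 1000000

open Finset Filter Asymptotics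

namespace GS

/-- `Pr[Bin(m, p) = k]`. -/
noncomputable def binomPr (m : ℕ) (p : ℝ) (k : ℕ) : ℝ :=
  (m.choose k : ℝ) * p ^ k * (1 - p) ^ (m - k)

/-- `Pr[Bin(m, p) ≥ t]`, for a real threshold `t`. -/
noncomputable def binomPrGe (m : ℕ) (p : ℝ) (t : ℝ) : ℝ :=
  ∑ j ∈ Finset.range (m + 1), if t ≤ (j : ℝ) then binomPr m p j else 0

end GS

open GS Filter Asymptotics

namespace GSAux

noncomputable def T (m k : ℕ) (p : ℝ) : ℝ := ∑ j ∈ Finset.Icc k m, binomPr m p j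

lemma binomPr_nonneg {p : ℝ} (h0 : 0 ≤ p) (h1 : p ≤ 1) (m j : ℕ) :
    0 ≤ binomPr m p j := by
  unfold binomPr
  have h2 : (0:ℝ) ≤ 1 - p := by linarith
  positivity

lemma T_nonneg {p : ℝ} (h0 : 0 ≤ p) (h1 : p ≤ 1) (m k : ℕ) : 0 ≤ T m k p :=
  Finset.sum_nonneg fun j _ => binomPr_nonneg h0 h1 m j

lemma binomPrGe_eq (m k : ℕ) (p : ℝ) : binomPrGe m p (k : ℝ) = T m k p := by
  unfold binomPrGe T
  rw [← Finset.sum_filter]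
  apply Finset.sum_congr _ fun j _ => rfl
  ext j
  simp [Nat.lt_succ_iff, Nat.cast_le]
  omega

lemma sum_binomPr (m : ℕ) (p : ℝ) : ∑ j ∈ Finset.range (m+1), binomPr m p j = 1 := by
  have h := add_pow p (1 - p) m
  have h2 : p + (1 - p) = 1 := by ring
  rw [h2, one_pow] at h
  rw [h]
  exact Finset.sum_congr rfl fun j _ => by unfold binomPr; ring

lemma T_zero (m : ℕ) (p : ℝ) : T m 0 p = 1 := by
  unfold T
  rw [← Finset.Ico_add_one_right_eq_Icc, ← Finset.range_eq_Ico]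
  exact sum_binomPr m p

lemma T_anti {p : ℝ} (h0 : 0 ≤ p) (h1 : p ≤ 1) (m : ℕ) {k k' : ℕ} (h : k ≤ k') :
    T m k' p ≤ T m k p := by
  apply Finset.sum_le_sum_of_subset_of_nonneg
  · exact Finset.Icc_subset_Icc_left h
  · exact fun j _ _ => binomPr_nonneg h0 h1 m j


lemma binomPr_pascal (m i : ℕ) (p : ℝ) :
    binomPr (m+1) p (i+1) = (1 - p) * binomPr m p (i+1) + p * binomPr m p i := by
  unfold binomPr
  rcases lt_trichotomy i m with h | rfl | h
  · have e1 : m + 1 - (i + 1) = (m - (i+1)) + 1 := by omega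
    have e2 : m - i = (m - (i+1)) + 1 := by omega
    rw [Nat.choose_succ_succ, e1, e2]
    push_cast
    ring
  · have e1 : i + 1 - (i + 1) = 0 := by omega
    have e2 : i - i = 0 := by omega
    rw [Nat.choose_succ_succ, e1, e2, Nat.choose_succ_self]
    push_cast
    ring
  · have e0 : m.choose (i+1) = 0 := Nat.choose_eq_zero_of_lt (by omega)
    have e1 : (m+1).choose (i+1) = 0 := Nat.choose_eq_zero_of_lt (by omega)
    have e2 : m.choose i = 0 := Nat.choose_eq_zero_of_lt h
    rw [e0, e1, e2]
    push_cast
    ring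


lemma binomPr_top (m : ℕ) (p : ℝ) : binomPr m p (m+1) = 0 := by
  unfold binomPr
  rw [Nat.choose_succ_self]
  norm_num

lemma T_succ (m : ℕ) {k : ℕ} (hk : 1 ≤ k) (hkm : k ≤ m + 1) (p : ℝ) :
    T (m+1) k p = (1 - p) * T m k p + p * T m (k-1) p := by
  obtain ⟨i, rfl⟩ : ∃ i, k = i + 1 := ⟨k - 1, by omega⟩
  unfold T
  have key : ∀ j ∈ Finset.Icc (i+1) (m+1),
      binomPr (m+1) p j = (1 - p) * binomPr m p j + p * binomPr m p (j-1) := by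
    intro j hj
    simp only [Finset.mem_Icc] at hj
    obtain ⟨l, rfl⟩ : ∃ l, j = l + 1 := ⟨j - 1, by omega⟩
    simpa using binomPr_pascal m l p
  rw [Finset.sum_congr rfl key, Finset.sum_add_distrib, ← Finset.mul_sum, ← Finset.mul_sum]
  congr 1
  · congr 1
    rw [Finset.sum_Icc_succ_top (by omega), binomPr_top]
    ring
  · congr 1
    have himg : Finset.Icc (i+1) (m+1) = Finset.image (· + 1) (Finset.Icc i m) := by
      ext x
      simp only [Finset.mem_Icc, Finset.mem_image]
      constructor
      · intro h; exact ⟨x - 1, by omega, by omega⟩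
      · rintro ⟨y, hy, rfl⟩; omega
    rw [himg, Finset.sum_image (by intro a _ b _ h; simp only at h; omega)]
    simp

lemma T_mono_m {p : ℝ} (h0 : 0 ≤ p) (h1 : p ≤ 1) (k : ℕ) {m m' : ℕ} (h : m ≤ m') :
    T m k p ≤ T m' k p := by
  induction m', h using Nat.le_induction with
  | base => exact le_refl _
  | succ n hn ih =>
    refine le_trans ih ?_
    rcases Nat.eq_zero_or_pos k with rfl | hk
    · rw [T_zero, T_zero]
    rcases le_or_gt k (n+1) with hkm | hkm
    · rw [T_succ n hk hkm p]
      have h2 := T_anti h0 h1 n (show k - 1 ≤ k by omega)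
      nlinarith [h2]
    · have e : ∀ m'' : ℕ, m'' < k → T m'' k p = 0 := by
        intro m'' hm
        unfold T
        rw [Finset.Icc_eq_empty (by omega)]
        simp
      rw [e n (by omega), e (n+1) (by omega)]

lemma hasDerivAt_T (m k : ℕ) (hkm : k ≤ m) (x : ℝ) :
    HasDerivAt (fun x => T m k x)
      ((m.choose k : ℝ) * k * x^(k-1) * (1-x)^(m-k)) x := by
  have hterm : ∀ j ∈ Finset.Icc k m,
      HasDerivAt (fun x : ℝ => binomPr m x j)
        ((m.choose j : ℝ) * j * x^(j-1) * (1-x)^(m-j)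
          - (m.choose (j+1) : ℝ) * (j+1) * x^j * (1-x)^(m-(j+1))) x := by
    intro j hj
    simp only [Finset.mem_Icc] at hj
    have h1 : HasDerivAt (fun x : ℝ => (m.choose j : ℝ) * x ^ j)
        ((m.choose j : ℝ) * (j * x ^ (j-1))) x :=
      (hasDerivAt_pow j x).const_mul _
    have h2 : HasDerivAt (fun x : ℝ => (1 - x) ^ (m - j))
        (((m - j : ℕ) : ℝ) * (1 - x) ^ (m - j - 1) * (0 - 1)) x := by
      exact HasDerivAt.comp x (hasDerivAt_pow (m - j) (1 - x))
        ((hasDerivAt_const x (1:ℝ)).sub (hasDerivAt_id x))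
    have h3 := h1.mul h2
    refine HasDerivAt.congr_deriv (f := fun x => binomPr m x j) h3 ?_
    have hcast : ((m.choose (j+1) : ℝ) * ((j:ℝ)+1)) = (m.choose j : ℝ) * ((m - j : ℕ) : ℝ) := by
      exact_mod_cast congrArg (Nat.cast : ℕ → ℝ) (Nat.choose_succ_right_eq m j)
    have e1 : m - (j + 1) = m - j - 1 := by omega
    rw [e1]
    push_cast [hcast]
    ring_nf
  have hsum := HasDerivAt.sum hterm
  refine (HasDerivAt.fun_sum hterm).congr_deriv ?_
  set φ : ℕ → ℝ := fun j => (m.choose j : ℝ) * j * x^(j-1) * (1-x)^(m-j) with hφ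
  have htel : ∑ j ∈ Finset.Icc k m, (φ j - φ (j+1)) = φ k - φ (m+1) := by
    rw [← Finset.Ico_add_one_right_eq_Icc, Finset.sum_Ico_eq_sum_range]
    have := Finset.sum_range_sub' (fun i => φ (k + i)) (m + 1 - k)
    simpa [show k + (m + 1 - k) = m + 1 by omega, add_assoc] using this
  have e : ∀ j ∈ Finset.Icc k m,
      (m.choose j : ℝ) * j * x^(j-1) * (1-x)^(m-j)
        - (m.choose (j+1) : ℝ) * ((j:ℝ)+1) * x^j * (1-x)^(m-(j+1)) = φ j - φ (j+1) := by
    intro j hj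
    simp only [Finset.mem_Icc] at hj
    simp only [hφ]
    have e2 : j + 1 - 1 = j := by omega
    rw [e2]
    push_cast
    ring
  rw [Finset.sum_congr rfl e, htel, hφ]
  simp [Nat.choose_succ_self]

lemma T_mono_p (m k : ℕ) {p q : ℝ} (hp0 : 0 ≤ p) (hpq : p ≤ q) (hq1 : q ≤ 1) :
    T m k p ≤ T m k q := by
  rcases Nat.eq_zero_or_pos k with rfl | hk
  · rw [T_zero, T_zero]
  rcases le_or_gt k m with hkm | hkm
  · have hdiff : Differentiable ℝ (fun x => T m k x) :=
      fun x => (hasDerivAt_T m k hkm x).differentiableAt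
    have hmono : MonotoneOn (fun x => T m k x) (Set.Icc (0:ℝ) 1) := by
      apply monotoneOn_of_deriv_nonneg (convex_Icc 0 1) hdiff.continuous.continuousOn
        (fun x _ => (hdiff x).differentiableWithinAt)
      intro x hx
      rw [interior_Icc] at hx
      rw [(hasDerivAt_T m k hkm x).deriv]
      have h1 : (0:ℝ) ≤ x := hx.1.le
      have h2 : (0:ℝ) ≤ 1 - x := by linarith [hx.2]
      positivity
    exact hmono ⟨hp0, hpq.trans hq1⟩ ⟨hp0.trans hpq, hq1⟩ hpq
  · unfold T
    rw [Finset.Icc_eq_empty (by omega)]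
    simp

lemma descFactorial_ratio {n n' s : ℕ} (h1 : n' ≤ n) (hs : s ≤ n') :
    ∀ j, j ≤ s →
      (((n':ℝ) - s + 1)/((n:ℝ) - s + 1))^j * (n.descFactorial j : ℝ)
        ≤ (n'.descFactorial j : ℝ) := by
  have hsn : (s:ℝ) ≤ n' := by exact_mod_cast hs
  have hn : (n':ℝ) ≤ n := by exact_mod_cast h1
  have hD : (0:ℝ) < (n:ℝ) - s + 1 := by linarith
  have hN : (0:ℝ) ≤ (n':ℝ) - s + 1 := by linarith
  have hρ0 : 0 ≤ ((n':ℝ) - s + 1)/((n:ℝ) - s + 1) := div_nonneg hN hD.le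
  intro j
  induction j with
  | zero => simp
  | succ i ih =>
    intro hj
    have hi : i ≤ s := by omega
    have ihi := ih hi
    rw [Nat.descFactorial_succ, Nat.descFactorial_succ]
    have hin : i ≤ n := by omega
    have hin' : i ≤ n' := by omega
    push_cast [Nat.cast_sub hin, Nat.cast_sub hin']
    -- goal: ρ^(i+1) * ((↑n - ↑i) * descF n i) ≤ (↑n' - ↑i) * descF n' i
    set ρ := ((n':ℝ) - s + 1)/((n:ℝ) - s + 1) with hρ
    have key : ρ * ((n:ℝ) - i) ≤ (n':ℝ) - i := by
      rw [hρ, div_mul_eq_mul_div, div_le_iff₀ hD]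
      have hi1 : (i:ℝ) ≤ (s:ℝ) - 1 := by
        have : (i:ℝ) + 1 ≤ s := by exact_mod_cast hj
        linarith
      nlinarith [mul_nonneg (sub_nonneg.2 hn) (sub_nonneg.2 (by linarith : (i:ℝ) + 1 ≤ (s:ℝ)))]
    have hdn : (0:ℝ) ≤ (n.descFactorial i : ℝ) := by positivity
    have hni : (0:ℝ) ≤ (n:ℝ) - i := by
      have : (i:ℝ) ≤ n := by exact_mod_cast hin
      linarith
    calc ρ^(i+1) * (((n:ℝ) - i) * (n.descFactorial i : ℝ))
        = (ρ * ((n:ℝ) - i)) * (ρ^i * (n.descFactorial i : ℝ)) := by ring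
      _ ≤ ((n':ℝ) - i) * (n'.descFactorial i : ℝ) := by
          apply mul_le_mul key ihi (by positivity) (by linarith [key, mul_nonneg hρ0 hni])

lemma choose_ratio {n n' s j : ℕ} (h1 : n' ≤ n) (hs : s ≤ n') (hj : j ≤ s) :
    (((n':ℝ) - s + 1)/((n:ℝ) - s + 1))^j * (n.choose j : ℝ) ≤ (n'.choose j : ℝ) := by
  have h := descFactorial_ratio h1 hs j hj
  rw [Nat.descFactorial_eq_factorial_mul_choose, Nat.descFactorial_eq_factorial_mul_choose] at h
  push_cast at h
  have hf : (0:ℝ) < (j.factorial : ℝ) := by exact_mod_cast j.factorial_pos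
  have h' : (j.factorial:ℝ) * ((((n':ℝ) - s + 1)/((n:ℝ) - s + 1))^j * (n.choose j : ℝ))
      ≤ (j.factorial:ℝ) * (n'.choose j : ℝ) := by
    calc (j.factorial:ℝ) * ((((n':ℝ) - s + 1)/((n:ℝ) - s + 1))^j * (n.choose j : ℝ))
        = (((n':ℝ) - s + 1)/((n:ℝ) - s + 1))^j * ((j.factorial:ℝ) * (n.choose j : ℝ)) := by ring
      _ ≤ (j.factorial:ℝ) * (n'.choose j : ℝ) := h
  exact le_of_mul_le_mul_left h' hf

lemma binomPr_compare {n n' s j : ℕ} {p p' ε : ℝ}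
    (hn : n' ≤ n) (hjs : j < s) (hsn : s ≤ n')
    (hp'0 : 0 ≤ p') (hp'p : p' ≤ p) (hp1 : p ≤ 1)
    (hε0 : 0 < ε) (hε2 : ε ≤ 1/2)
    (Hd : (s:ℝ) * ((n:ℝ) - n') ≤ ε * n')
    (Hp : (s:ℝ) * (p - p') ≤ ε * p) :
    (1-2*ε)*(1-ε) * binomPr n p j ≤ binomPr n' p' j := by
  have hp0 : 0 ≤ p := hp'0.trans hp'p
  have hq0 : (0:ℝ) ≤ 1 - p := by linarith
  have hq'0 : (0:ℝ) ≤ 1 - p' := by linarith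
  have hs1 : 1 ≤ s := by omega
  have hn'1 : 1 ≤ n' := by omega
  have hsn'R : (s:ℝ) ≤ n' := by exact_mod_cast hsn
  have hnn'R : (n':ℝ) ≤ n := by exact_mod_cast hn
  have hs1R : (1:ℝ) ≤ s := by exact_mod_cast hs1
  set ρ := ((n':ℝ) - s + 1)/((n:ℝ) - s + 1) with hρdef
  have hD : (0:ℝ) < (n:ℝ) - s + 1 := by linarith
  have hρ0 : 0 ≤ ρ := div_nonneg (by linarith) hD.le
  have hρ1 : ρ ≤ 1 := by
    rw [hρdef, div_le_one hD]; linarith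
  -- ρ^s ≥ 1 - 2ε
  have hρs : 1 - 2*ε ≤ ρ^s := by
    have hber : 1 + (s:ℝ) * (ρ - 1) ≤ ρ^s := by
      have := one_add_mul_le_pow (a := ρ - 1) (by linarith) s
      simpa using this
    refine le_trans ?_ hber
    -- need s * (1 - ρ) ≤ 2ε
    have h1ρ : 1 - ρ = ((n:ℝ) - n')/((n:ℝ) - s + 1) := by
      rw [hρdef]; field_simp; ring
    have hkey : (s:ℝ) * (1 - ρ) ≤ 2*ε := by
      rw [h1ρ, show (s:ℝ) * (((n:ℝ) - n')/((n:ℝ) - s + 1)) = ((s:ℝ) * ((n:ℝ) - n'))/((n:ℝ) - s + 1) by ring,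
        div_le_iff₀ hD]
      rcases eq_or_lt_of_le hn with rfl | hlt
      · have : (n':ℝ) - n' = 0 := by ring
        rw [this]
        nlinarith
      · have hge1 : (1:ℝ) ≤ (n:ℝ) - n' := by
          have : n' + 1 ≤ n := hlt
          have := Nat.cast_le (α := ℝ) |>.mpr this
          push_cast at this
          linarith
        have hsd : (s:ℝ) ≤ (s:ℝ) * ((n:ℝ) - n') := by nlinarith
        have hsmall : (s:ℝ) ≤ ε * n' := le_trans hsd Hd
        nlinarith
    linarith
  have hρj : 1 - 2*ε ≤ ρ^j :=
    hρs.trans (pow_le_pow_of_le_one hρ0 hρ1 hjs.le)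
  have hchoose : (1-2*ε) * (n.choose j : ℝ) ≤ (n'.choose j : ℝ) := by
    refine le_trans ?_ (choose_ratio hn hsn hjs.le)
    exact mul_le_mul_of_nonneg_right hρj (by positivity)
  -- p' powers
  have hpow : (1-ε) * p^j ≤ p'^j := by
    rcases eq_or_lt_of_le hp0 with rfl | hppos
    · have hp'eq : p' = 0 := le_antisymm hp'p hp'0
      subst hp'eq
      cases j with
      | zero => norm_num; linarith
      | succ i => simp [pow_succ]
    · have hsR0 : (0:ℝ) < s := by linarith
      have hstep : p - p' ≤ ε/s * p := by
        rw [div_mul_eq_mul_div, le_div_iff₀ hsR0]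
        nlinarith
      have hbase0 : (0:ℝ) ≤ 1 - ε/(s:ℝ) := by
        have : ε/(s:ℝ) ≤ ε := by
          apply div_le_self hε0.le hs1R
        linarith
      have hdivnn : (0:ℝ) ≤ ε/(s:ℝ) := div_nonneg hε0.le hsR0.le
      have hber : 1 - ε ≤ (1 - ε/(s:ℝ))^s := by
        have hb := one_add_mul_le_pow (a := -(ε/(s:ℝ))) (by linarith) s
        rw [show (1 + -(ε/(s:ℝ))) = 1 - ε/(s:ℝ) by ring] at hb
        rw [show 1 + (s:ℝ) * -(ε/(s:ℝ)) = 1 - ε by field_simp; ring] at hb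
        exact hb
      have h2 : (1 - ε/(s:ℝ))^s ≤ (1 - ε/(s:ℝ))^j :=
        pow_le_pow_of_le_one hbase0 (by linarith) hjs.le
      have h3 : (p * (1 - ε/(s:ℝ)))^j ≤ p'^j := by
        apply pow_le_pow_left₀ (mul_nonneg hp0 hbase0)
        nlinarith
      calc (1-ε) * p^j ≤ (1 - ε/(s:ℝ))^s * p^j := by
            apply mul_le_mul_of_nonneg_right hber (by positivity)
        _ ≤ (1 - ε/(s:ℝ))^j * p^j := by
            apply mul_le_mul_of_nonneg_right h2 (by positivity)
        _ = (p * (1 - ε/(s:ℝ)))^j := by rw [mul_pow]; ring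
        _ ≤ p'^j := h3
  -- (1-p) powers
  have hqpow : (1-p)^(n-j) ≤ (1-p')^(n'-j) := by
    calc (1-p)^(n-j) ≤ (1-p)^(n'-j) := by
          apply pow_le_pow_of_le_one hq0 (by linarith) (Nat.sub_le_sub_right hn j)
      _ ≤ (1-p')^(n'-j) := by
          apply pow_le_pow_left₀ hq0 (by linarith)
  -- combine
  unfold binomPr
  calc (1-2*ε)*(1-ε) * ((n.choose j : ℝ) * p^j * (1-p)^(n-j))
      = ((1-2*ε) * (n.choose j : ℝ)) * ((1-ε) * p^j) * (1-p)^(n-j) := by ring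
    _ ≤ ((n'.choose j : ℝ) * p'^j) * (1-p')^(n'-j) := by
        apply mul_le_mul (mul_le_mul hchoose hpow
            (mul_nonneg (by linarith) (pow_nonneg hp0 j)) (by positivity)) hqpow
          (pow_nonneg hq0 _) (mul_nonneg (by positivity) (pow_nonneg hp'0 _))

lemma main_pt {n n' k s : ℕ} {p p' ε : ℝ}
    (hn : n' ≤ n) (hks : k ≤ s) (hsn : s ≤ n')
    (hp'0 : 0 ≤ p') (hp'p : p' ≤ p) (hp1 : p ≤ 1)
    (hε0 : 0 < ε) (hε2 : ε ≤ 1/2)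
    (Hd : (s:ℝ) * ((n:ℝ) - n') ≤ ε * n')
    (Hp : (s:ℝ) * (p - p') ≤ ε * p)
    (HT : T n s p ≤ ε * T n k p) :
    (1-2*ε)*(1-ε)*((1-ε) * T n k p) ≤ T n' k p' ∧ T n' k p' ≤ T n k p := by
  have hp0 : 0 ≤ p := hp'0.trans hp'p
  have hp'1 : p' ≤ 1 := hp'p.trans hp1
  constructor
  swap
  · exact (T_mono_m hp'0 hp'1 k hn).trans (T_mono_p n k hp'0 hp'p hp1)
  -- split T n k p
  have hsplit : T n k p = (∑ j ∈ Finset.Ico k s, binomPr n p j) + T n s p := by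
    unfold T
    rw [← Finset.Ico_add_one_right_eq_Icc, ← Finset.Ico_add_one_right_eq_Icc,
      ← Finset.sum_Ico_consecutive (fun j => binomPr n p j) hks (by omega : s ≤ n + 1)]
  have hmid : (1-ε) * T n k p ≤ ∑ j ∈ Finset.Ico k s, binomPr n p j := by
    nlinarith [hsplit, HT]
  have hterm : ∀ j ∈ Finset.Ico k s, (1-2*ε)*(1-ε) * binomPr n p j ≤ binomPr n' p' j := by
    intro j hj
    simp only [Finset.mem_Ico] at hj
    exact binomPr_compare hn hj.2 hsn hp'0 hp'p hp1 hε0 hε2 Hd Hp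
  have hsub : ∑ j ∈ Finset.Ico k s, binomPr n' p' j ≤ T n' k p' := by
    apply Finset.sum_le_sum_of_subset_of_nonneg
    · intro j hj
      simp only [Finset.mem_Ico] at hj
      simp only [Finset.mem_Icc]
      omega
    · exact fun j _ _ => binomPr_nonneg hp'0 hp'1 n' j
  have hfac : (0:ℝ) ≤ (1-2*ε)*(1-ε) := by nlinarith
  calc (1-2*ε)*(1-ε)*((1-ε) * T n k p)
      ≤ (1-2*ε)*(1-ε) * ∑ j ∈ Finset.Ico k s, binomPr n p j :=
        mul_le_mul_of_nonneg_left hmid hfac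
    _ = ∑ j ∈ Finset.Ico k s, (1-2*ε)*(1-ε) * binomPr n p j := Finset.mul_sum _ _ _
    _ ≤ ∑ j ∈ Finset.Ico k s, binomPr n' p' j := Finset.sum_le_sum hterm
    _ ≤ T n' k p' := hsub

end GSAux

open GSAux

theorem binomial_tail_stable
    (n' : ℕ → ℕ) (hn'le : ∀ n, n' n ≤ n)
    (hn'o : (fun n : ℕ => (n : ℝ) - (n' n : ℝ)) =o[atTop] (fun n : ℕ => (n : ℝ)))
    (p p' : ℕ → ℝ) (hp : ∀ n, p n ∈ Set.Icc (0 : ℝ) 1)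
    (hp'le : ∀ n, p' n ≤ p n)
    (hp'o : (fun n : ℕ => p n - p' n) =o[atTop] p)
    (k s : ℕ → ℕ) (hks : ∀ n, k n ≤ s n) (hsn' : ∀ n, s n ≤ n' n)
    (hPr : (fun n : ℕ => binomPrGe n (p n) ((s n : ℝ)))
        =o[atTop] (fun n : ℕ => binomPrGe n (p n) ((k n : ℝ))))
    (h1 : (fun n : ℕ => ((n : ℝ) - (n' n : ℝ)) / (n' n : ℝ))
        =o[atTop] (fun n : ℕ => 1 / (s n : ℝ)))
    (h2 : (fun n : ℕ => (p n - p' n) / p n)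
        =o[atTop] (fun n : ℕ => 1 / (s n : ℝ))) :
    ∃ c : ℕ → ℝ, Tendsto c atTop (nhds 1) ∧
      ∀ᶠ n : ℕ in atTop,
        binomPrGe n (p n) ((k n : ℝ))
          = c n * binomPrGe (n' n) (p' n) ((k n : ℝ)) := by
  classical
  have hp0 : ∀ n, 0 ≤ p n := fun n => (hp n).1
  have hp1 : ∀ n, p n ≤ 1 := fun n => (hp n).2
  have hev0 : ∀ᶠ n in atTop, 0 ≤ p' n := by
    filter_upwards [hp'o.def (by norm_num : (0:ℝ) < 1/2)] with n hn
    rw [Real.norm_eq_abs, Real.norm_eq_abs, abs_of_nonneg (hp0 n),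
      abs_of_nonneg (sub_nonneg.2 (hp'le n))] at hn
    linarith [hp0 n]
  have key : ∀ ε : ℝ, 0 < ε → ε ≤ 1/2 →
      ∀ᶠ n in atTop,
        (1-2*ε)*(1-ε)*((1-ε) * T n (k n) (p n)) ≤ T (n' n) (k n) (p' n)
          ∧ T (n' n) (k n) (p' n) ≤ T n (k n) (p n) := by
    intro ε hε0 hε2
    filter_upwards [hPr.def hε0, h1.def hε0, h2.def hε0, hev0] with n hn1 hn2 hn3 hn4
    have HT : T n (s n) (p n) ≤ ε * T n (k n) (p n) := by
      rw [binomPrGe_eq, binomPrGe_eq, Real.norm_eq_abs, Real.norm_eq_abs,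
        abs_of_nonneg (T_nonneg (hp0 n) (hp1 n) _ _),
        abs_of_nonneg (T_nonneg (hp0 n) (hp1 n) _ _)] at hn1
      exact hn1
    have Hd : ((s n : ℝ)) * ((n:ℝ) - (n' n : ℝ)) ≤ ε * (n' n : ℝ) := by
      rcases Nat.eq_zero_or_pos (s n) with hs0 | hs0
      · have hz : ((s n : ℝ)) = 0 := by rw [hs0]; simp
        rw [hz, zero_mul]
        exact mul_nonneg hε0.le (Nat.cast_nonneg _)
      · have hn'pos : 0 < n' n := lt_of_lt_of_le hs0 (hsn' n)
        have hSpos : (0:ℝ) < (s n : ℝ) := by exact_mod_cast hs0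
        have hN'pos : (0:ℝ) < (n' n : ℝ) := by exact_mod_cast hn'pos
        have hNN' : ((n' n : ℝ)) ≤ (n:ℝ) := by exact_mod_cast hn'le n
        rw [Real.norm_eq_abs, Real.norm_eq_abs,
          abs_of_nonneg (div_nonneg (sub_nonneg.2 hNN') hN'pos.le),
          abs_of_nonneg (one_div_nonneg.2 hSpos.le)] at hn2
        rw [mul_one_div] at hn2
        rw [div_le_div_iff₀ hN'pos hSpos] at hn2
        linarith [hn2]
    have Hp : ((s n : ℝ)) * (p n - p' n) ≤ ε * p n := by
      rcases Nat.eq_zero_or_pos (s n) with hs0 | hs0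
      · have hz : ((s n : ℝ)) = 0 := by rw [hs0]; simp
        rw [hz, zero_mul]
        exact mul_nonneg hε0.le (hp0 n)
      · rcases eq_or_lt_of_le (hp0 n) with hpz | hppos
        · have hp'z : p' n = 0 := le_antisymm (by rw [hpz]; exact hp'le n) hn4
          rw [hp'z, ← hpz]
          simp
        · have hSpos : (0:ℝ) < (s n : ℝ) := by exact_mod_cast hs0
          rw [Real.norm_eq_abs, Real.norm_eq_abs,
            abs_of_nonneg (div_nonneg (sub_nonneg.2 (hp'le n)) hppos.le),
            abs_of_nonneg (one_div_nonneg.2 hSpos.le)] at hn3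
          rw [mul_one_div] at hn3
          rw [div_le_div_iff₀ hppos hSpos] at hn3
          linarith [hn3]
    exact main_pt (hn'le n) (hks n) (hsn' n) hn4 (hp'le n) (hp1 n) hε0 hε2 Hd Hp HT
  refine ⟨fun n => if T (n' n) (k n) (p' n) = 0 then 1
      else T n (k n) (p n) / T (n' n) (k n) (p' n), ?_, ?_⟩
  · rw [Metric.tendsto_nhds]
    intro δ hδ
    have hε0 : (0:ℝ) < min (δ/16) (1/8) := lt_min (by positivity) (by norm_num)
    have hε2 : min (δ/16) (1/8) ≤ 1/2 := (min_le_right _ _).trans (by norm_num)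
    filter_upwards [key _ hε0 hε2, hev0] with n hkey hn4
    obtain ⟨hl, hu⟩ := hkey
    set ε := min (δ/16) (1/8) with hε
    set A := T n (k n) (p n) with hA
    set B := T (n' n) (k n) (p' n) with hB
    have hA0 : 0 ≤ A := T_nonneg (hp0 n) (hp1 n) _ _
    have hB0 : 0 ≤ B := T_nonneg hn4 ((hp'le n).trans (hp1 n)) _ _
    have hεd : ε ≤ δ/16 := min_le_left _ _
    have hε8 : ε ≤ 1/8 := min_le_right _ _
    by_cases hBz : B = 0
    · simp only [hBz, if_pos rfl]
      simpa using hδ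
    · rw [if_neg hBz]
      have hBpos : 0 < B := lt_of_le_of_ne hB0 (Ne.symm hBz)
      have hq : (0:ℝ) ≤ 5*ε^2 - 2*ε^3 := by nlinarith [sq_nonneg ε, hε0.le, hε2]
      have h14 : (1 - 4*ε) * A ≤ B := by nlinarith [hl, mul_nonneg hq hA0]
      have hge1 : 1 ≤ A / B := (one_le_div hBpos).2 hu
      rw [Real.dist_eq, abs_of_nonneg (by linarith : (0:ℝ) ≤ A / B - 1)]
      rw [div_sub_one hBz, div_lt_iff₀ hBpos]
      have hA2B : A ≤ 2*B := by
        nlinarith [h14, mul_nonneg (show (0:ℝ) ≤ 1/2 - 4*ε by linarith) hA0]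
      have h4 : A - B ≤ 4*(ε*A) := by nlinarith [h14]
      have h5 : ε*A ≤ 2*(ε*B) := by nlinarith [mul_le_mul_of_nonneg_left hA2B hε0.le]
      have h6 : ε*B ≤ (δ/16)*B := mul_le_mul_of_nonneg_right hεd hB0
      linarith [h4, h5, h6, mul_pos hδ hBpos]
  · filter_upwards [key (1/4) (by norm_num) (by norm_num), hev0] with n hkey hn4
    obtain ⟨hl, hu⟩ := hkey
    rw [binomPrGe_eq, binomPrGe_eq]
    by_cases hBz : T (n' n) (k n) (p' n) = 0
    · rw [if_pos hBz, hBz, one_mul]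
      have hA0 : 0 ≤ T n (k n) (p n) := T_nonneg (hp0 n) (hp1 n) _ _
      rw [hBz] at hl
      nlinarith [hl, hA0]
    · rw [if_neg hBz, div_mul_cancel₀ _ hBz]
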